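/- For every integer a with 0 ≤ a ≤ N+1, every integer m ≥ 0, and every u ∈ ℂ, the duality relation ξ^{(a)}_m(u) · ξ(u + 2a − N − 1 + s) = ξ^{(N−a+1)}_m(u + 2a − N − 1 + s) · ξ(u) holds; equivalently ξ^{(a)}_m(u)/ξ(u) = ξ^{(N−a+1)}_m(u + 2a − N − 1 + s)/ξ(u + 2a − N − 1 + s). -/

import Mathlib

open Complex

noncomputable def oneSubXD (x w : ℂ → ℂ) : ℂ → ℂ := fun u => w u - x u * w (u + 2)

noncomputable def Lop (x : ℕ → ℂ → ℂ) : ℕ → (ℂ → ℂ) → (ℂ → ℂ)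
  | 0 => fun w => w
  | k + 1 => fun w => oneSubXD (x (k + 1)) (Lop x k w)

noncomputable def casorati (N : ℕ) (w : ℕ → ℂ → ℂ) (idx : ℕ → ℕ) (u : ℂ) : ℂ :=
  Matrix.det (Matrix.of fun j k : Fin (N + 1) => w (j.1 + 1) (u + 2 * (idx k.1 : ℂ)))

noncomputable def DsubF (f w : ℂ → ℂ) : ℂ → ℂ := fun u => w (u + 2) - f u * w u

noncomputable def Lfac (f : ℕ → ℂ → ℂ) (Nv : ℕ) : ℕ → (ℂ → ℂ) → (ℂ → ℂ)
  | 0 => fun w => w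
  | a + 1 => fun w => DsubF (f (Nv + 1 - a)) (Lfac f Nv a w)

/-! ### Coefficient expansions of the difference operators -/

noncomputable def dcoef (x : ℕ → ℂ → ℂ) : ℕ → ℕ → ℂ → ℂ
  | 0, 0, _ => 1
  | 0, _+1, _ => 0
  | k+1, 0, v => dcoef x k 0 v
  | k+1, i+1, v => dcoef x k (i+1) v - x (k+1) v * dcoef x k i (v+2)

noncomputable def scoef (x : ℕ → ℂ → ℂ) (NN : ℕ) : ℕ → ℕ → ℂ → ℂ
  | 0, 0, _ => 1
  | 0, _+1, _ => 0
  | k+1, 0, v => scoef x NN k 0 v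
  | k+1, i+1, v => scoef x NN k (i+1) v - scoef x NN k i v * x (NN - k) (v + 2*i)

noncomputable def Mid (x : ℕ → ℂ → ℂ) (j : ℕ) : ℕ → (ℂ → ℂ) → (ℂ → ℂ)
  | 0, w => w
  | k+1, w => oneSubXD (x (j+k+1)) (Mid x j k w)

lemma dcoef_zero (x : ℕ → ℂ → ℂ) : ∀ k v, dcoef x k 0 v = 1 := by
  intro k
  induction k with
  | zero => intro v; rfl
  | succ k ih => intro v; rw [dcoef]; exact ih v

lemma dcoef_gt (x : ℕ → ℂ → ℂ) : ∀ k i v, k < i → dcoef x k i v = 0 := by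
  intro k
  induction k with
  | zero => intro i v hi; match i, hi with
            | i+1, _ => rfl
  | succ k ih =>
    intro i v hi
    match i, hi with
    | i+1, hi =>
      rw [dcoef, ih (i+1) v (by omega), ih i (v+2) (by omega)]
      ring

lemma scoef_gt (x : ℕ → ℂ → ℂ) (NN : ℕ) : ∀ k i v, k < i → scoef x NN k i v = 0 := by
  intro k
  induction k with
  | zero => intro i v hi; match i, hi with
            | i+1, _ => rfl
  | succ k ih =>
    intro i v hi
    match i, hi with
    | i+1, hi =>
      rw [scoef, ih (i+1) v (by omega), ih i v (by omega)]
      ring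

lemma Lop_expand (x : ℕ → ℂ → ℂ) : ∀ k (f : ℂ → ℂ) (v : ℂ),
    Lop x k f v = ∑ i ∈ Finset.range (k+1), dcoef x k i v * f (v + 2*i) := by
  intro k
  induction k with
  | zero => intro f v; simp [Lop, dcoef]
  | succ k ih =>
    intro f v
    have h0 : Lop x (k+1) f v = Lop x k f v - x (k+1) v * Lop x k f (v+2) := rfl
    rw [h0, ih, ih]
    rw [Finset.sum_range_succ' (fun i => dcoef x (k+1) i v * f (v + 2*i)) (k+1)]
    rw [Finset.sum_range_succ' (fun i => dcoef x k i v * f (v + 2*i)) k]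
    have h1 : ∀ i : ℕ, dcoef x (k+1) (i+1) v * f (v + 2*(i+1:ℕ))
        = dcoef x k (i+1) v * f (v + 2*(i+1:ℕ))
          - x (k+1) v * (dcoef x k i (v+2) * f ((v+2) + 2*i)) := by
      intro i
      rw [dcoef]
      push_cast
      ring_nf
    simp only [h1]
    rw [Finset.sum_sub_distrib]
    rw [Finset.sum_range_succ (fun i => dcoef x k (i+1) v * f (v + 2*(i+1:ℕ))) k]
    rw [dcoef_gt x k (k+1) v (by omega)]
    rw [Finset.mul_sum]
    rw [show dcoef x (k+1) 0 v = dcoef x k 0 v from rfl]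
    ring

lemma Lop_eq_Mid (x : ℕ → ℂ → ℂ) : ∀ k f, Lop x k f = Mid x 0 k f := by
  intro k
  induction k with
  | zero => intro f; rfl
  | succ k ih =>
    intro f
    show oneSubXD (x (k+1)) (Lop x k f) = oneSubXD (x (0+k+1)) (Mid x 0 k f)
    rw [ih, Nat.zero_add]

lemma Mid_succ (x : ℕ → ℂ → ℂ) : ∀ k j f,
    Mid x j (k+1) f = Mid x (j+1) k (oneSubXD (x (j+1)) f) := by
  intro k
  induction k with
  | zero => intro j f; rfl
  | succ k ih =>
    intro j f
    show oneSubXD (x (j+(k+1)+1)) (Mid x j (k+1) f) = oneSubXD (x ((j+1)+k+1)) (Mid x (j+1) k _)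
    rw [ih j f, show j+(k+1)+1 = (j+1)+k+1 by omega]

lemma Mid_expand (x : ℕ → ℂ → ℂ) (NN : ℕ) : ∀ k, k ≤ NN → ∀ (f : ℂ → ℂ) (v : ℂ),
    Mid x (NN - k) k f v = ∑ i ∈ Finset.range (k+1), scoef x NN k i v * f (v + 2*i) := by
  intro k
  induction k with
  | zero => intro _ f v; simp [Mid, scoef]
  | succ k ih =>
    intro hk f v
    have e1 : NN - (k+1) + 1 = NN - k := by omega
    rw [Mid_succ, e1, ih (by omega)]
    have h1 : ∀ i : ℕ, scoef x NN k i v * (oneSubXD (x (NN - k)) f) (v + 2*i)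
        = scoef x NN k i v * f (v + 2*i)
          - scoef x NN k i v * x (NN - k) (v + 2*i) * f (v + 2*(i+1:ℕ)) := by
      intro i
      show scoef x NN k i v * (f (v+2*i) - x (NN-k) (v+2*i) * f (v+2*i+2)) = _
      push_cast
      ring_nf
    simp only [h1]
    rw [Finset.sum_sub_distrib]
    rw [Finset.sum_range_succ' (fun i => scoef x NN (k+1) i v * f (v + 2*i)) (k+1)]
    rw [Finset.sum_range_succ' (fun i => scoef x NN k i v * f (v + 2*i)) k]
    have h2 : ∀ i : ℕ, scoef x NN (k+1) (i+1) v * f (v + 2*(i+1:ℕ))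
        = scoef x NN k (i+1) v * f (v + 2*(i+1:ℕ))
          - scoef x NN k i v * x (NN - k) (v + 2*i) * f (v + 2*(i+1:ℕ)) := by
      intro i
      rw [scoef]
      ring
    simp only [h2]
    rw [Finset.sum_sub_distrib]
    rw [Finset.sum_range_succ (fun i => scoef x NN k (i+1) v * f (v + 2*(i+1:ℕ))) k]
    rw [scoef_gt x NN k (k+1) v (by omega)]
    rw [Finset.sum_range_succ
      (fun i => scoef x NN k i v * x (NN - k) (v + 2*i) * f (v + 2*(i+1:ℕ))) k]
    rw [show scoef x NN (k+1) 0 v = scoef x NN k 0 v from rfl]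
    push_cast
    ring

lemma sum_delta_eq (M : ℕ) (A B : ℕ → ℂ) (v : ℂ)
    (h : ∀ f : ℂ → ℂ, ∑ i ∈ Finset.range M, A i * f (v + 2*i)
          = ∑ i ∈ Finset.range M, B i * f (v + 2*i)) :
    ∀ i₀, i₀ < M → A i₀ = B i₀ := by
  intro i₀ hi₀
  have key : ∀ C : ℕ → ℂ, ∑ i ∈ Finset.range M,
      C i * (if v + 2*(i:ℂ) = v + 2*(i₀:ℕ) then (1:ℂ) else 0) = C i₀ := by
    intro C
    rw [Finset.sum_eq_single i₀]
    · simp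
    · intro b _ hb
      have : v + 2*(b:ℂ) ≠ v + 2*(i₀:ℕ) := by
        intro hEq
        apply hb
        have h2 : (b:ℂ) = (i₀:ℕ) := by
          exact mul_left_cancel₀ two_ne_zero (add_left_cancel hEq)
        exact_mod_cast h2
      simp [this]
    · intro h'; exact absurd (Finset.mem_range.2 hi₀) h'
  have := h (fun z => if z = v + 2*(i₀:ℕ) then (1:ℂ) else 0)
  rwa [key A, key B] at this

lemma scoef_eq_dcoef (x : ℕ → ℂ → ℂ) (NN : ℕ) (i : ℕ) (v : ℂ) (hi : i < NN + 1) :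
    scoef x NN NN i v = dcoef x NN i v := by
  have h1 : ∀ f : ℂ → ℂ, Lop x NN f v = Mid x (NN - NN) NN f v := by
    intro f; rw [Lop_eq_Mid, Nat.sub_self]
  have h2 : ∀ f : ℂ → ℂ,
      ∑ j ∈ Finset.range (NN+1), scoef x NN NN j v * f (v + 2*j)
      = ∑ j ∈ Finset.range (NN+1), dcoef x NN j v * f (v + 2*j) := by
    intro f
    rw [← Mid_expand x NN NN le_rfl f v, ← h1 f, Lop_expand]
  exact sum_delta_eq (NN+1) _ _ v h2 i hi


open Fin.NatCast in
lemma finRotate_pow_apply (L a : ℕ) (z : Fin (L+1)) :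
    ((finRotate (L+1))^a) z = z + (a : Fin (L+1)) := by
  induction a with
  | zero => simp
  | succ a ih =>
    rw [pow_succ', Equiv.Perm.mul_apply, finRotate_succ_apply, ih]
    push_cast
    rw [add_assoc]

open Fin.NatCast in
lemma finRotate_pow_val (L a : ℕ) (z : Fin (L+1)) :
    ((((finRotate (L+1))^a) z : Fin (L+1)) : ℕ) = ((z : ℕ) + a) % (L+1) := by
  rw [finRotate_pow_apply]
  simp [Fin.add_def, Fin.val_natCast, Nat.add_mod_mod]

lemma neg_one_pow_sq_nat (a : ℕ) : ((-1:ℂ))^(a*a) = (-1:ℂ)^a := by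
  rcases Nat.even_or_odd a with he | ho
  · rw [he.neg_one_pow, (he.mul_right a).neg_one_pow]
  · rw [ho.neg_one_pow, (ho.mul ho).neg_one_pow]

lemma rot_perm_sign (m a NN : ℕ) (hm : 1 ≤ m) (ha : a ≤ NN) (π : Equiv.Perm (Fin (m + NN)))
    (hπ : ∀ k : Fin (m + NN), ((π k : ℕ))
      = if (k:ℕ) < m then (k:ℕ) + a else if (k:ℕ) < m + a then (k:ℕ) - m else k) :
    ((Equiv.Perm.sign π : ℤ) : ℂ) = (-1:ℂ)^(m*a) := by
  obtain ⟨L, hL⟩ : ∃ L, m + a = L + 1 := ⟨m + a - 1, by omega⟩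
  have hlen : m + NN = (m + a) + (NN - a) := by omega
  set E : Fin (m + NN) ≃ (Fin (m+a) ⊕ Fin (NN - a)) :=
    (finCongr hlen).trans finSumFinEquiv.symm with hE
  have hEval : ∀ k : Fin (m + NN),
      E k = if h : (k:ℕ) < m + a then Sum.inl ⟨(k:ℕ), h⟩
            else Sum.inr ⟨(k:ℕ) - (m+a), by omega⟩ := by
    intro k
    rw [hE]
    simp only [Equiv.trans_apply, finCongr_apply]
    rcases lt_or_ge (k:ℕ) (m+a) with h | h
    · rw [dif_pos h]
      apply finSumFinEquiv.injective
      simp [finSumFinEquiv_apply_left]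
      apply Fin.ext
      simp
    · rw [dif_neg (by omega)]
      apply finSumFinEquiv.injective
      simp [finSumFinEquiv_apply_right]
      apply Fin.ext
      simp
      omega
  have hval : ∀ (L2 : ℕ), 0 < L2 → ∀ (z : Fin L2),
      (((finRotate L2)^a) z : ℕ) = ((z:ℕ) + a) % L2 := by
    intro L2 hL2 z
    obtain ⟨L3, rfl⟩ : ∃ L3, L2 = L3 + 1 := ⟨L2 - 1, by omega⟩
    exact finRotate_pow_val L3 a z
  have hsr : ∀ (L2 : ℕ), 0 < L2 →
      Equiv.Perm.sign (finRotate L2) = (-1)^(L2-1) := by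
    intro L2 hL2
    obtain ⟨L3, rfl⟩ : ∃ L3, L2 = L3 + 1 := ⟨L2 - 1, by omega⟩
    simp [sign_finRotate]
  set ρ : Equiv.Perm (Fin (m+a)) := (finRotate (m+a))^a with hρ
  have hsign : Equiv.Perm.sign π
      = Equiv.Perm.sign (Equiv.sumCongr ρ (Equiv.refl (Fin (NN - a)))) := by
    apply Equiv.Perm.sign_eq_sign_of_equiv π _ E
    intro k
    rw [hEval, hEval]
    have hπk := hπ k
    rcases lt_or_ge (k:ℕ) m with h1 | h1
    · have hv : ((π k : ℕ)) = (k:ℕ) + a := by rw [hπk, if_pos h1]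
      rw [dif_pos (by omega : ((π k : ℕ) < m + a)), dif_pos (by omega : ((k:ℕ) < m + a))]
      simp only [Equiv.sumCongr_apply, Sum.map_inl, Sum.inl.injEq]
      apply Fin.ext
      rw [hval (m+a) (by omega)]
      simp only [hv, Fin.val_mk]
      rw [Nat.mod_eq_of_lt (by omega)]
    · rcases lt_or_ge (k:ℕ) (m+a) with h2 | h2
      · have hv : ((π k : ℕ)) = (k:ℕ) - m := by
          rw [hπk, if_neg (by omega), if_pos h2]
        rw [dif_pos (by omega : ((π k : ℕ) < m + a)), dif_pos h2]
        simp only [Equiv.sumCongr_apply, Sum.map_inl, Sum.inl.injEq]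
        apply Fin.ext
        rw [hval (m+a) (by omega)]
        simp only [hv, Fin.val_mk]
        rw [Nat.mod_eq_sub_mod (by omega), Nat.mod_eq_of_lt (by omega)]
        omega
      · have hv : ((π k : ℕ)) = (k:ℕ) := by
          rw [hπk, if_neg (by omega), if_neg (by omega)]
        rw [dif_neg (by omega : ¬ ((π k : ℕ) < m + a)), dif_neg (by omega)]
        simp only [Equiv.sumCongr_apply, Sum.map_inr, Sum.inr.injEq, Equiv.refl_apply]
        apply Fin.ext
        simp only [hv, Fin.val_mk]
  have hsign2 : Equiv.Perm.sign π = (-1)^((m+a-1)*a) := by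
    rw [hsign, Equiv.Perm.sign_sumCongr, Equiv.Perm.sign_refl, mul_one, hρ, map_pow,
      hsr (m+a) (by omega), ← pow_mul]
  have hcast : ((Equiv.Perm.sign π : ℤ) : ℂ) = (-1:ℂ)^((m+a-1)*a) := by
    rw [hsign2]
    push_cast
    norm_num
  rw [hcast]
  have h1 : (m+a-1)*a + a = m*a + a*a := by
    obtain ⟨M, rfl⟩ : ∃ M, m = M + 1 := ⟨m - 1, by omega⟩
    have e : M + 1 + a - 1 = M + a := by omega
    rw [e]
    ring
  have h2 : (-1:ℂ)^((m+a-1)*a) * (-1)^a = (-1:ℂ)^(m*a) * (-1)^a := by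
    rw [← pow_add, h1, pow_add, neg_one_pow_sq_nat]
  exact mul_right_cancel₀ (pow_ne_zero _ (by norm_num)) h2


/-- the entries of the "relation" rows -/
noncomputable def relc (x : ℕ → ℂ → ℂ) (N : ℕ) (u : ℂ) (t kk : ℕ) : ℂ :=
  if t ≤ kk then dcoef x (N+1) (kk - t) (u + 2*(t:ℕ)) else 0

lemma casorati_congr (N : ℕ) (w : ℕ → ℂ → ℂ) (idx idx' : ℕ → ℕ) (u : ℂ)
    (h : ∀ k, k < N + 1 → idx k = idx' k) :
    casorati N w idx u = casorati N w idx' u := by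
  unfold casorati
  congr 1
  ext j k
  rw [Matrix.of_apply, Matrix.of_apply, h k.1 k.2]

lemma sum_delta_mul_left (K t : ℕ) (ht : t < K) (g : ℕ → ℂ) :
    ∑ kk ∈ Finset.range K, (if kk = t then (1:ℂ) else 0) * g kk = g t := by
  rw [Finset.sum_eq_single t]
  · simp
  · intro b _ hb; simp [hb]
  · intro h'; exact absurd (Finset.mem_range.2 ht) h'

lemma sum_delta_mul_right (K t : ℕ) (ht : t < K) (g : ℕ → ℂ) :
    ∑ kk ∈ Finset.range K, g kk * (if kk = t then (1:ℂ) else 0) = g t := by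
  rw [Finset.sum_eq_single t]
  · simp
  · intro b _ hb; simp [hb]
  · intro h'; exact absurd (Finset.mem_range.2 ht) h'


noncomputable def PmatD (N m : ℕ) (w : ℕ → ℂ → ℂ) (u : ℂ) :
    Matrix (Fin m ⊕ Fin (N+1)) (Fin (m+(N+1))) ℂ :=
  fun r k => Sum.elim (fun t : Fin m => if (k:ℕ) = (t:ℕ) then (1:ℂ) else 0)
    (fun j : Fin (N+1) => w (j.1+1) (u + 2*((k:ℕ):ℂ))) r

noncomputable def AmatD (N m a : ℕ) (x : ℕ → ℂ → ℂ) (u : ℂ) : Matrix (Fin m) (Fin m) ℂ :=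
  Matrix.of fun t t' : Fin m => relc x N u t'.1 (a + t.1)

lemma tri_det_one (N m : ℕ) (x : ℕ → ℂ → ℂ) (u : ℂ) :
    (Matrix.of fun t t' : Fin m => relc x N u t'.1 t.1).det = 1 := by
  rw [Matrix.det_of_lowerTriangular]
  · have h : ∀ t : Fin m, (Matrix.of fun t t' : Fin m => relc x N u t'.1 t.1) t t = 1 := by
      intro t
      rw [Matrix.of_apply]
      unfold relc
      rw [if_pos le_rfl, Nat.sub_self, dcoef_zero]
    rw [Finset.prod_congr rfl (fun t _ => h t)]
    simp
  · intro i j hij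
    rw [Matrix.of_apply]
    unfold relc
    rw [if_neg (by exact fun hc => absurd hc (by simpa using hij))]

lemma main_det_aux (N m : ℕ) (x w : ℕ → ℂ → ℂ) (u : ℂ) (hm : 1 ≤ m)
    (hrec : ∀ b, 1 ≤ b → b ≤ N+1 → ∀ v : ℂ,
      ∑ i ∈ Finset.range (N+2), dcoef x (N+1) i v * w b (v + 2*(i:ℕ)) = 0)
    (a : ℕ) (ha : a ≤ N+1) :
    casorati N w (fun kk => if kk < a then kk else kk + m) u
      = ((PmatD N m w u).submatrix (finSumFinEquiv.symm) id).det
        * ((-1:ℂ)^(m*a) * (AmatD N m a x u).det) := by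
  set SA : ℕ → ℕ := fun kk => if kk < a then kk else kk + m with hSA
  have hSAb : ∀ j : ℕ, j < N+1 → SA j < m + (N+1) := by
    intro j hj; rw [hSA]; dsimp only; split <;> omega
  have hSAmid : ∀ j : ℕ, j < N+1 → ¬ (a ≤ SA j ∧ SA j < a + m) := by
    intro j hj; rw [hSA]; dsimp only; split <;> omega
  have hSAinj : ∀ j j' : ℕ, j < N+1 → j' < N+1 → SA j = SA j' → j = j' := by
    intro j j' hj hj' h; rw [hSA] at h; dsimp only at h
    split_ifs at h <;> omega
  set Qmat : Matrix (Fin (m+(N+1))) (Fin m ⊕ Fin (N+1)) ℂ :=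
    fun k r => Sum.elim (fun t : Fin m => relc x N u t.1 (k:ℕ))
      (fun j : Fin (N+1) => if (k:ℕ) = SA (j:ℕ) then (1:ℂ) else 0) r with hQ
  -- entries of the product
  have hPQ11 : ∀ t t' : Fin m,
      (PmatD N m w u * Qmat) (Sum.inl t) (Sum.inl t') = relc x N u t'.1 t.1 := by
    intro t t'
    rw [Matrix.mul_apply]
    simp only [PmatD, hQ, Sum.elim_inl, Sum.elim_inr]
    rw [Fin.sum_univ_eq_sum_range
      (fun kk => (if kk = (t:ℕ) then (1:ℂ) else 0) * relc x N u t'.1 kk) (m+(N+1))]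
    exact sum_delta_mul_left _ _ (by omega) _
  have hPQ21 : ∀ (j : Fin (N+1)) (t : Fin m),
      (PmatD N m w u * Qmat) (Sum.inr j) (Sum.inl t) = 0 := by
    intro j t
    rw [Matrix.mul_apply]
    simp only [PmatD, hQ, Sum.elim_inl, Sum.elim_inr]
    rw [Fin.sum_univ_eq_sum_range
      (fun kk => w (j.1+1) (u + 2*(kk:ℕ)) * relc x N u t.1 kk) (m+(N+1))]
    have hsub : Finset.Ico (t.1) (t.1+(N+2)) ⊆ Finset.range (m+(N+1)) := by
      intro z hz
      rw [Finset.mem_Ico] at hz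
      rw [Finset.mem_range]
      have := t.2
      omega
    rw [← Finset.sum_subset hsub]
    · rw [Finset.sum_Ico_eq_sum_range]
      have e1 : t.1 + (N+2) - t.1 = N+2 := by omega
      rw [e1]
      have e2 : ∀ i ∈ Finset.range (N+2),
          w (j.1+1) (u + 2*((t.1+i : ℕ):ℂ)) * relc x N u t.1 (t.1+i)
          = dcoef x (N+1) i (u + 2*(t.1:ℕ)) * w (j.1+1) ((u + 2*(t.1:ℕ)) + 2*(i:ℕ)) := by
        intro i _
        unfold relc
        rw [if_pos (by omega), Nat.add_sub_cancel_left]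
        have e3 : u + 2*((t.1+i : ℕ):ℂ) = (u + 2*(t.1:ℕ)) + 2*(i:ℕ) := by
          push_cast; ring
        rw [e3]; ring
      rw [Finset.sum_congr rfl e2]
      exact hrec (j.1+1) (by omega) (by omega) _
    · intro z hz hz2
      rw [Finset.mem_range] at hz
      rw [Finset.mem_Ico] at hz2
      unfold relc
      rcases lt_or_ge z t.1 with h | h
      · rw [if_neg (by omega)]; ring
      · rw [if_pos (by omega), dcoef_gt x (N+1) (z - t.1) _ (by omega)]; ring
  have hPQ22 : ∀ j j' : Fin (N+1),
      (PmatD N m w u * Qmat) (Sum.inr j) (Sum.inr j')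
        = w (j.1+1) (u + 2*((SA j'.1 : ℕ):ℂ)) := by
    intro j j'
    rw [Matrix.mul_apply]
    simp only [PmatD, hQ, Sum.elim_inl, Sum.elim_inr]
    rw [Fin.sum_univ_eq_sum_range
      (fun kk => w (j.1+1) (u + 2*(kk:ℕ)) * (if kk = SA j'.1 then (1:ℂ) else 0)) (m+(N+1))]
    exact sum_delta_mul_right _ _ (hSAb j'.1 j'.2) _
  have hblock : PmatD N m w u * Qmat = Matrix.fromBlocks
      (Matrix.of fun t t' : Fin m => relc x N u t'.1 t.1)
      ((PmatD N m w u * Qmat).toBlocks₁₂) 0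
      (Matrix.of fun j k : Fin (N+1) => w (j.1 + 1) (u + 2 * (SA k.1 : ℂ))) := by
    ext r r'
    cases r with
    | inl t => cases r' with
      | inl t' => rw [hPQ11]; rfl
      | inr j' => rfl
    | inr j => cases r' with
      | inl t' => rw [hPQ21]; rfl
      | inr j' => rw [hPQ22]; rfl
  have hdet1 : (PmatD N m w u * Qmat).det = casorati N w SA u := by
    rw [hblock, Matrix.det_fromBlocks_zero₂₁, tri_det_one, one_mul]
    rfl
  -- reindexed product
  have hmul : (PmatD N m w u).submatrix (finSumFinEquiv.symm) id
      * Qmat.submatrix id (finSumFinEquiv.symm)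
      = (PmatD N m w u * Qmat).submatrix (finSumFinEquiv.symm) (finSumFinEquiv.symm) := by
    have h := Matrix.submatrix_mul_equiv (PmatD N m w u) Qmat
      (finSumFinEquiv.symm) (Equiv.refl (Fin (m+(N+1)))) (finSumFinEquiv.symm)
    simpa using h
  have hdet2 : casorati N w SA u
      = ((PmatD N m w u).submatrix (finSumFinEquiv.symm) id).det
        * (Qmat.submatrix id (finSumFinEquiv.symm)).det := by
    rw [← hdet1, ← Matrix.det_mul, hmul, Matrix.det_submatrix_equiv_self]
  -- the permutation
  have hψb1 : ∀ t : Fin m, a + t.1 < m + (N+1) := by intro t; have := t.2; omega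
  set ψfun : (Fin m ⊕ Fin (N+1)) → Fin (m+(N+1)) :=
    Sum.elim (fun t : Fin m => ⟨a + t.1, hψb1 t⟩)
      (fun j : Fin (N+1) => ⟨SA j.1, hSAb j.1 j.2⟩) with hψ
  have hψinj : Function.Injective ψfun := by
    rintro (t | j) (t' | j') h <;> rw [hψ] at h <;>
      simp only [Sum.elim_inl, Sum.elim_inr, Fin.mk.injEq] at h
    · have : t = t' := by apply Fin.ext; omega
      rw [this]
    · exact absurd ⟨by omega, by omega⟩ (hSAmid j'.1 j'.2)
    · exact absurd ⟨by omega, by omega⟩ (hSAmid j.1 j.2)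
    · have : j = j' := Fin.ext (hSAinj j.1 j'.1 j.2 j'.2 h)
      rw [this]
  have hψbij : Function.Bijective ψfun := by
    rw [Fintype.bijective_iff_injective_and_card]
    exact ⟨hψinj, by simp⟩
  set ψ : (Fin m ⊕ Fin (N+1)) ≃ Fin (m+(N+1)) := Equiv.ofBijective ψfun hψbij with hψe
  set π : Equiv.Perm (Fin (m+(N+1))) := finSumFinEquiv.symm.trans ψ with hπe
  have hπfun : ∀ k : Fin (m+(N+1)), π k = ψfun (finSumFinEquiv.symm k) := by
    intro k; rw [hπe]; rfl
  have hesymm1 : ∀ (k : Fin (m+(N+1))) (h : (k:ℕ) < m),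
      finSumFinEquiv.symm k = Sum.inl (⟨(k:ℕ), h⟩ : Fin m) := by
    intro k h
    apply finSumFinEquiv.injective
    rw [Equiv.apply_symm_apply, finSumFinEquiv_apply_left]
    apply Fin.ext
    simp
  have hesymm2 : ∀ (k : Fin (m+(N+1))) (h : ¬ ((k:ℕ) < m)),
      finSumFinEquiv.symm k = Sum.inr (⟨(k:ℕ) - m, by have := k.2; omega⟩ : Fin (N+1)) := by
    intro k h
    apply finSumFinEquiv.injective
    rw [Equiv.apply_symm_apply, finSumFinEquiv_apply_right]
    apply Fin.ext
    simp
    omega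
  have hπval : ∀ k : Fin (m+(N+1)), ((π k : ℕ))
      = if (k:ℕ) < m then (k:ℕ) + a else if (k:ℕ) < m + a then (k:ℕ) - m else k := by
    intro k
    rw [hπfun]
    rcases lt_or_ge (k:ℕ) m with h | h
    · rw [hesymm1 k h, if_pos h, hψ]
      simp only [Sum.elim_inl]
      omega
    · rw [hesymm2 k (by omega), hψ]
      simp only [Sum.elim_inr]
      rw [if_neg (by omega), hSA]
      dsimp only
      split_ifs <;> omega
  have hπsign : ((Equiv.Perm.sign π : ℤ) : ℂ) = (-1:ℂ)^(m*a) :=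
    rot_perm_sign m a (N+1) hm ha π hπval
  -- the permuted Q-matrix is block triangular
  have hQψ : Qmat.submatrix ψfun id = Matrix.fromBlocks
      (AmatD N m a x u) 0 ((Qmat.submatrix ψfun id).toBlocks₂₁) 1 := by
    ext r r'
    cases r with
    | inl t => cases r' with
      | inl t' =>
        show Qmat (ψfun (Sum.inl t)) (Sum.inl t') = _
        rw [hψ, hQ]
        rfl
      | inr j' =>
        show Qmat (ψfun (Sum.inl t)) (Sum.inr j') = _
        rw [hψ, hQ]
        dsimp only [Sum.elim_inl, Sum.elim_inr]
        rw [if_neg (by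
          intro hc
          exact absurd ⟨by omega, by have := t.2; omega⟩ (hSAmid j'.1 j'.2))]
        rfl
    | inr j => cases r' with
      | inl t' => rfl
      | inr j' =>
        show Qmat (ψfun (Sum.inr j)) (Sum.inr j') = _
        rw [hψ, hQ]
        dsimp only [Sum.elim_inr]
        by_cases hjj : j = j'
        · rw [hjj, if_pos rfl]
          simp [Matrix.fromBlocks, Matrix.one_apply]
        · rw [if_neg (fun hc => hjj (Fin.ext (hSAinj j.1 j'.1 j.2 j'.2 hc)))]
          simp [Matrix.fromBlocks, Matrix.one_apply, hjj]
  have hdet3 : (Qmat.submatrix ψfun id).det = (AmatD N m a x u).det := by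
    rw [hQψ, Matrix.det_fromBlocks_zero₁₂, Matrix.det_one, mul_one]
  have hre : Qmat.submatrix ψfun id
      = ((Qmat.submatrix id (finSumFinEquiv.symm)).submatrix π id).submatrix
          (finSumFinEquiv) (finSumFinEquiv) := by
    ext r r'
    simp only [Matrix.submatrix_apply, id_eq]
    rw [hπfun, Equiv.symm_apply_apply, Equiv.symm_apply_apply]
  have hdet4 : (AmatD N m a x u).det
      = ((Equiv.Perm.sign π : ℤ) : ℂ) * (Qmat.submatrix id (finSumFinEquiv.symm)).det := by
    rw [← hdet3, hre, Matrix.det_submatrix_equiv_self, Matrix.det_permute]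
  have hsq : ((Equiv.Perm.sign π : ℤ) : ℂ) * ((Equiv.Perm.sign π : ℤ) : ℂ) = 1 := by
    rcases Int.units_eq_one_or (Equiv.Perm.sign π) with h | h <;> rw [h] <;> norm_num
  have hdet5 : (Qmat.submatrix id (finSumFinEquiv.symm)).det
      = (-1:ℂ)^(m*a) * (AmatD N m a x u).det := by
    rw [hdet4, ← mul_assoc, ← hπsign, hsq, one_mul]
  rw [hdet2, hdet5]

lemma main_det (N m : ℕ) (x w : ℕ → ℂ → ℂ) (u : ℂ)
    (hrec : ∀ b, 1 ≤ b → b ≤ N+1 → ∀ v : ℂ,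
      ∑ i ∈ Finset.range (N+2), dcoef x (N+1) i v * w b (v + 2*(i:ℕ)) = 0)
    (a : ℕ) (ha : a ≤ N+1) :
    casorati N w (fun k => if k < a then k else k + m) u
      = (-1:ℂ)^(m*a) * casorati N w (fun k => k + m) u * (AmatD N m a x u).det := by
  rcases Nat.eq_zero_or_pos m with hm0 | hm
  · subst hm0
    rw [casorati_congr N w _ (fun k => k + 0) u (by intro k _; simp)]
    have : (AmatD N 0 a x u).det = 1 := Matrix.det_isEmpty
    rw [this]
    norm_num
  · have h0 := main_det_aux N m x w u hm hrec 0 (by omega)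
    have hA0 : (AmatD N m 0 x u) = (Matrix.of fun t t' : Fin m => relc x N u t'.1 t.1) := by
      ext t t'
      unfold AmatD
      rw [Matrix.of_apply, Matrix.of_apply, Nat.zero_add]
    rw [hA0, tri_det_one] at h0
    rw [casorati_congr N w (fun kk => if kk < 0 then kk else kk + m) (fun k => k + m) u
      (by intro k _; simp)] at h0
    simp only [Nat.mul_zero, pow_zero, one_mul, mul_one] at h0
    rw [main_det_aux N m x w u hm hrec a ha, ← h0]
    ring


noncomputable def PhiP (x : ℕ → ℂ → ℂ) (N : ℕ) (s : ℂ) (k : ℕ) (v : ℂ) : ℂ :=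
  ∏ c ∈ Finset.Icc 1 k, x c (v + (N:ℂ) + 1 - 2*(c:ℂ) + s)

lemma PhiP_zero (x : ℕ → ℂ → ℂ) (N : ℕ) (s : ℂ) (v : ℂ) : PhiP x N s 0 v = 1 := by
  unfold PhiP; simp

lemma PhiP_succ (x : ℕ → ℂ → ℂ) (N : ℕ) (s : ℂ) (k : ℕ) (v : ℂ) :
    PhiP x N s (k+1) v = PhiP x N s k v * x (k+1) (v + (N:ℂ) + 1 - 2*((k+1 : ℕ):ℂ) + s) := by
  unfold PhiP
  rw [Finset.prod_Icc_succ_top (by omega)]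

section PartA

variable (n N : ℕ) (s : ℂ) (Y x : ℕ → ℂ → ℂ)

/-- closed form of `PhiP` in the range `0 ≤ j ≤ n-1`. -/
lemma PhiA (hn : 2 ≤ n) (hN1 : N + 1 = 2*n)
    (hY0 : ∀ v : ℂ, Y 0 v = 1)
    (hYne : ∀ a, a ≤ n → ∀ v : ℂ, Y a v ≠ 0)
    (hxa : ∀ a, 1 ≤ a → a ≤ n - 1 → ∀ u : ℂ, x a u = Y a (u + a) / Y (a-1) (u + a + 1)) :
    ∀ j, j + 1 ≤ n → ∀ v : ℂ, PhiP x N s j v = Y j (v + 2*(n:ℂ) - (j:ℂ) + s) := by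
  have hNc : (N:ℂ) = 2*(n:ℂ) - 1 := by
    have : ((N:ℕ):ℂ) + 1 = ((2*n : ℕ) : ℂ) := by exact_mod_cast congrArg (Nat.cast (R := ℂ)) hN1
    push_cast at this
    linear_combination this
  intro j
  induction j with
  | zero => intro _ v; rw [PhiP_zero, hY0]
  | succ j ih =>
    intro hj v
    rw [PhiP_succ, ih (by omega)]
    have hx := hxa (j+1) (by omega) (by omega) (v + (N:ℂ) + 1 - 2*((j+1:ℕ):ℂ) + s)
    simp only [Nat.add_sub_cancel] at hx
    rw [hx]
    have e1 : v + (N:ℂ) + 1 - 2*((j+1:ℕ):ℂ) + s + (↑(j+1):ℂ) = v + 2*(n:ℂ) - (↑(j+1):ℂ) + s := by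
      push_cast; rw [hNc]; ring
    have e2 : v + (N:ℂ) + 1 - 2*((j+1:ℕ):ℂ) + s + (↑(j+1):ℂ) + 1 = v + 2*(n:ℂ) - (j:ℂ) + s := by
      push_cast; rw [hNc]; ring
    rw [e2, e1]
    have hne := hYne j (by omega) (v + 2*(n:ℂ) - (j:ℂ) + s)
    field_simp

/-- closed form at `n`. -/
lemma PhiN (hn : 2 ≤ n) (hN1 : N + 1 = 2*n)
    (hY0 : ∀ v : ℂ, Y 0 v = 1)
    (hYne : ∀ a, a ≤ n → ∀ v : ℂ, Y a v ≠ 0)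
    (hYper : ∀ a, a ≤ n → ∀ v : ℂ, Y a (v + 2*s) = Y a v)
    (hxa : ∀ a, 1 ≤ a → a ≤ n - 1 → ∀ u : ℂ, x a u = Y a (u + a) / Y (a-1) (u + a + 1))
    (hxn : ∀ u : ℂ, x n u = Y n (u + n) * Y n (u + n + s) / Y (n-1) (u + n + 1)) :
    ∀ v : ℂ, PhiP x N s n v = Y n (v + (n:ℂ) + s) * Y n (v + (n:ℂ)) := by
  have hNc : (N:ℂ) = 2*(n:ℂ) - 1 := by
    have : ((N:ℕ):ℂ) + 1 = ((2*n : ℕ) : ℂ) := by exact_mod_cast congrArg (Nat.cast (R := ℂ)) hN1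
    push_cast at this
    linear_combination this
  intro v
  obtain ⟨p, rfl⟩ : ∃ p, n = p + 2 := ⟨n-2, by omega⟩
  rw [show PhiP x N s (p+2) v = PhiP x N s ((p+1)+1) v from rfl, PhiP_succ,
    PhiA (p+2) N s Y x hn hN1 hY0 hYne hxa (p+1) le_rfl v]
  have hx := hxn (v + (N:ℂ) + 1 - 2*((p+1+1:ℕ):ℂ) + s)
  simp only [show p+2-1 = p+1 from rfl] at hx
  rw [hx]
  have e0 : v + 2*((p+2:ℕ):ℂ) - ((p+1:ℕ):ℂ) + s
      = v + ((p+2:ℕ):ℂ) + 1 + s := by push_cast; ring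
  have e1 : v + (N:ℂ) + 1 - 2*((p+1+1:ℕ):ℂ) + s + ((p+2:ℕ):ℂ)
      = v + ((p+2:ℕ):ℂ) + s := by push_cast; rw [hNc]; push_cast; ring
  have e2 : v + (N:ℂ) + 1 - 2*((p+1+1:ℕ):ℂ) + s + ((p+2:ℕ):ℂ) + s
      = (v + ((p+2:ℕ):ℂ)) + 2*s := by push_cast; rw [hNc]; push_cast; ring
  have e3 : v + (N:ℂ) + 1 - 2*((p+1+1:ℕ):ℂ) + s + ((p+2:ℕ):ℂ) + 1
      = v + ((p+2:ℕ):ℂ) + 1 + s := by push_cast; rw [hNc]; push_cast; ring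
  rw [e3, e2, e1, e0, hYper (p+2) le_rfl (v + ((p+2:ℕ):ℂ))]
  have hne := hYne (p+1) (by omega) (v + ((p+2:ℕ):ℂ) + 1 + s)
  rw [← mul_div_assoc, mul_div_cancel_left₀ _ hne]

/-- closed form at `n+1`. -/
lemma PhiN1 (hn : 2 ≤ n) (hN1 : N + 1 = 2*n)
    (hY0 : ∀ v : ℂ, Y 0 v = 1)
    (hYne : ∀ a, a ≤ n → ∀ v : ℂ, Y a v ≠ 0)
    (hYper : ∀ a, a ≤ n → ∀ v : ℂ, Y a (v + 2*s) = Y a v)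
    (hxa : ∀ a, 1 ≤ a → a ≤ n - 1 → ∀ u : ℂ, x a u = Y a (u + a) / Y (a-1) (u + a + 1))
    (hxn : ∀ u : ℂ, x n u = Y n (u + n) * Y n (u + n + s) / Y (n-1) (u + n + 1))
    (hxnbar : ∀ u : ℂ, x (n+1) u
      = Y (n-1) (u + n + 1 + s) / (Y n (u + n + 2) * Y n (u + n + 2 + s))) :
    ∀ v : ℂ, PhiP x N s (n+1) v = Y (n-1) (v + (n:ℂ) - 1) := by
  have hNc : (N:ℂ) = 2*(n:ℂ) - 1 := by
    have : ((N:ℕ):ℂ) + 1 = ((2*n : ℕ) : ℂ) := by exact_mod_cast congrArg (Nat.cast (R := ℂ)) hN1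
    push_cast at this
    linear_combination this
  intro v
  rw [PhiP_succ, PhiN n N s Y x hn hN1 hY0 hYne hYper hxa hxn v]
  have hx := hxnbar (v + (N:ℂ) + 1 - 2*((n+1:ℕ):ℂ) + s)
  rw [hx]
  have e1 : v + (N:ℂ) + 1 - 2*((n+1:ℕ):ℂ) + s + (n:ℂ) + 1 + s
      = (v + (n:ℂ) - 1) + 2*s := by push_cast; rw [hNc]; ring
  have e2 : v + (N:ℂ) + 1 - 2*((n+1:ℕ):ℂ) + s + (n:ℂ) + 2
      = v + (n:ℂ) + s := by push_cast; rw [hNc]; ring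
  have e3 : v + (N:ℂ) + 1 - 2*((n+1:ℕ):ℂ) + s + (n:ℂ) + 2 + s
      = (v + (n:ℂ)) + 2*s := by push_cast; rw [hNc]; ring
  rw [e3, e2, e1, hYper (n-1) (by omega) (v + (n:ℂ) - 1), hYper n le_rfl (v + (n:ℂ))]
  have h1 := hYne n le_rfl (v + (n:ℂ) + s)
  have h2 := hYne n le_rfl (v + (n:ℂ))
  field_simp

/-- closed form for `n+1 ≤ j ≤ 2n`. -/
lemma PhiB (hn : 2 ≤ n) (hN1 : N + 1 = 2*n)
    (hY0 : ∀ v : ℂ, Y 0 v = 1)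
    (hYne : ∀ a, a ≤ n → ∀ v : ℂ, Y a v ≠ 0)
    (hYper : ∀ a, a ≤ n → ∀ v : ℂ, Y a (v + 2*s) = Y a v)
    (hxa : ∀ a, 1 ≤ a → a ≤ n - 1 → ∀ u : ℂ, x a u = Y a (u + a) / Y (a-1) (u + a + 1))
    (hxn : ∀ u : ℂ, x n u = Y n (u + n) * Y n (u + n + s) / Y (n-1) (u + n + 1))
    (hxnbar : ∀ u : ℂ, x (n+1) u
      = Y (n-1) (u + n + 1 + s) / (Y n (u + n + 2) * Y n (u + n + 2 + s)))
    (hxbar : ∀ a, 1 ≤ a → a ≤ n - 1 → ∀ u : ℂ, x (2*n - a + 1) u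
      = Y (a-1) (u + 2*(n:ℂ) - a + 1 + s) / Y a (u + 2*(n:ℂ) - a + 2 + s)) :
    ∀ t, t + 1 ≤ n → ∀ v : ℂ,
      PhiP x N s (n+1+t) v = Y (n-1-t) (v + (n:ℂ) - 1 - (t:ℂ)) := by
  have hNc : (N:ℂ) = 2*(n:ℂ) - 1 := by
    have : ((N:ℕ):ℂ) + 1 = ((2*n : ℕ) : ℂ) := by exact_mod_cast congrArg (Nat.cast (R := ℂ)) hN1
    push_cast at this
    linear_combination this
  intro t
  induction t with
  | zero =>
    intro _ v
    rw [show n+1+0 = n+1 from rfl, PhiN1 n N s Y x hn hN1 hY0 hYne hYper hxa hxn hxnbar v]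
    simp
  | succ t ih =>
    intro ht v
    rw [show n+1+(t+1) = (n+1+t)+1 from rfl, PhiP_succ, ih (by omega)]
    -- use hxbar with a := n-1-t
    obtain ⟨b, rfl⟩ : ∃ b, n = b + t + 2 := ⟨n - t - 2, by omega⟩
    have hx := hxbar (b+1) (by omega) (by omega)
      (v + (N:ℂ) + 1 - 2*((b+t+2+1+t+1:ℕ):ℂ) + s)
    rw [show 2*(b+t+2) - (b+1) + 1 = b+t+2+1+t+1 by omega] at hx
    simp only [Nat.add_sub_cancel] at hx
    rw [hx]
    have expT : ((b+t+2:ℕ):ℂ) = (b:ℂ) + (t:ℂ) + 2 := by push_cast; ring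
    have e0 : v + ((b+t+2:ℕ):ℂ) - 1 - (t:ℂ) = v + (b:ℂ) + 1 := by rw [expT]; ring
    have e1 : v + (N:ℂ) + 1 - 2*((b+t+2+1+t+1:ℕ):ℂ) + s + 2*((b+t+2:ℕ):ℂ) - ((b+1:ℕ):ℂ) + 1 + s
        = (v + (b:ℂ)) + 2*s := by push_cast; rw [hNc]; push_cast; ring
    have e2 : v + (N:ℂ) + 1 - 2*((b+t+2+1+t+1:ℕ):ℂ) + s + 2*((b+t+2:ℕ):ℂ) - ((b+1:ℕ):ℂ) + 2 + s
        = (v + (b:ℂ) + 1) + 2*s := by push_cast; rw [hNc]; push_cast; ring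
    rw [e0, e1, e2, hYper b (by omega) (v + (b:ℂ)), hYper (b+1) (by omega) (v + (b:ℂ) + 1)]
    rw [show b+t+2-1-(t+1) = b by omega]
    have eT : v + ((b+t+2:ℕ):ℂ) - 1 - ((t+1:ℕ):ℂ) = v + (b:ℂ) := by push_cast; ring
    rw [eT]
    have eI : b+t+2-1-t = b+1 := by omega
    have hne := hYne (b+1) (by omega) (v + (b:ℂ) + 1)
    rw [eI, ← mul_div_assoc, mul_comm (Y (b+1) _) (Y b _), mul_div_assoc, div_self hne, mul_one]

/-- `Φ` at the top is `1`. -/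
lemma Phi_top (hn : 2 ≤ n) (hN1 : N + 1 = 2*n)
    (hY0 : ∀ v : ℂ, Y 0 v = 1)
    (hYne : ∀ a, a ≤ n → ∀ v : ℂ, Y a v ≠ 0)
    (hYper : ∀ a, a ≤ n → ∀ v : ℂ, Y a (v + 2*s) = Y a v)
    (hxa : ∀ a, 1 ≤ a → a ≤ n - 1 → ∀ u : ℂ, x a u = Y a (u + a) / Y (a-1) (u + a + 1))
    (hxn : ∀ u : ℂ, x n u = Y n (u + n) * Y n (u + n + s) / Y (n-1) (u + n + 1))
    (hxnbar : ∀ u : ℂ, x (n+1) u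
      = Y (n-1) (u + n + 1 + s) / (Y n (u + n + 2) * Y n (u + n + 2 + s)))
    (hxbar : ∀ a, 1 ≤ a → a ≤ n - 1 → ∀ u : ℂ, x (2*n - a + 1) u
      = Y (a-1) (u + 2*(n:ℂ) - a + 1 + s) / Y a (u + 2*(n:ℂ) - a + 2 + s)) :
    ∀ v : ℂ, PhiP x N s (N+1) v = 1 := by
  intro v
  have h := PhiB n N s Y x hn hN1 hY0 hYne hYper hxa hxn hxnbar hxbar (n-1) (by omega) v
  rw [show n+1+(n-1) = N+1 by omega] at h
  rw [h, show n-1-(n-1) = 0 by omega, hY0]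

/-- the crux identity `Φ_{c-1}(v) = x_{N+2-c}(v) Φ_{c-1}(v+2) g_c(v+2)`. -/
lemma Ccrux (hn : 2 ≤ n) (hN1 : N + 1 = 2*n)
    (hY0 : ∀ v : ℂ, Y 0 v = 1)
    (hYne : ∀ a, a ≤ n → ∀ v : ℂ, Y a v ≠ 0)
    (hYper : ∀ a, a ≤ n → ∀ v : ℂ, Y a (v + 2*s) = Y a v)
    (hxa : ∀ a, 1 ≤ a → a ≤ n - 1 → ∀ u : ℂ, x a u = Y a (u + a) / Y (a-1) (u + a + 1))
    (hxn : ∀ u : ℂ, x n u = Y n (u + n) * Y n (u + n + s) / Y (n-1) (u + n + 1))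
    (hxnbar : ∀ u : ℂ, x (n+1) u
      = Y (n-1) (u + n + 1 + s) / (Y n (u + n + 2) * Y n (u + n + 2 + s)))
    (hxbar : ∀ a, 1 ≤ a → a ≤ n - 1 → ∀ u : ℂ, x (2*n - a + 1) u
      = Y (a-1) (u + 2*(n:ℂ) - a + 1 + s) / Y a (u + 2*(n:ℂ) - a + 2 + s)) :
    ∀ c, 1 ≤ c → c ≤ N+1 → ∀ v : ℂ,
      PhiP x N s (c-1) v
        = x (N+2-c) v * (PhiP x N s (c-1) (v+2)
            * x c ((v+2) + (N:ℂ) + 1 - 2*((c:ℕ):ℂ) + s)) := by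
  have hNc : (N:ℂ) = 2*(n:ℂ) - 1 := by
    have : ((N:ℕ):ℂ) + 1 = ((2*n : ℕ) : ℂ) := by exact_mod_cast congrArg (Nat.cast (R := ℂ)) hN1
    push_cast at this
    linear_combination this
  intro c hc1 hc2 v
  rcases Nat.lt_or_ge c n with hcn | hcn
  · -- case 1 : 1 ≤ c ≤ n-1
    obtain ⟨c', rfl⟩ : ∃ c', c = c'+1 := ⟨c-1, by omega⟩
    simp only [Nat.add_sub_cancel]
    rw [PhiA n N s Y x hn hN1 hY0 hYne hxa c' (by omega) v,
        PhiA n N s Y x hn hN1 hY0 hYne hxa c' (by omega) (v+2)]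
    rw [show N+2-(c'+1) = 2*n - (c'+1) + 1 by omega]
    rw [hxbar (c'+1) (by omega) (by omega) v]
    have hx2 := hxa (c'+1) (by omega) (by omega) ((v+2) + (N:ℂ) + 1 - 2*((c'+1:ℕ):ℂ) + s)
    simp only [Nat.add_sub_cancel] at hx2
    rw [hx2]
    have e1 : v + 2*(n:ℂ) - ((c'+1:ℕ):ℂ) + 1 + s = v + 2*(n:ℂ) - (c':ℂ) + s := by
      push_cast; ring
    have e2 : v + 2*(n:ℂ) - ((c'+1:ℕ):ℂ) + 2 + s = v + 2*(n:ℂ) - (c':ℂ) + 1 + s := by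
      push_cast; ring
    have e3 : (v+2) + (N:ℂ) + 1 - 2*((c'+1:ℕ):ℂ) + s + ((c'+1:ℕ):ℂ)
        = v + 2*(n:ℂ) - (c':ℂ) + 1 + s := by push_cast; rw [hNc]; ring
    have e4 : (v+2) + (N:ℂ) + 1 - 2*((c'+1:ℕ):ℂ) + s + ((c'+1:ℕ):ℂ) + 1
        = v + 2 + 2*(n:ℂ) - (c':ℂ) + s := by push_cast; rw [hNc]; ring
    rw [e4, e3, e2, e1]
    have h1 := hYne (c'+1) (by omega) (v + 2*(n:ℂ) - (c':ℂ) + 1 + s)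
    have h2 := hYne c' (by omega) (v + 2 + 2*(n:ℂ) - (c':ℂ) + s)
    field_simp
    rw [Nat.add_sub_cancel]
  · obtain ⟨p, hp⟩ : ∃ p, n = p + 2 := ⟨n-2, by omega⟩
    subst hp
    rcases Nat.eq_or_lt_of_le hcn with hc | hc
    · -- case 2 : c = n
      subst hc
      simp only [show (p+2)-1 = p+1 from rfl]
      rw [PhiA (p+2) N s Y x hn hN1 hY0 hYne hxa (p+1) le_rfl v,
          PhiA (p+2) N s Y x hn hN1 hY0 hYne hxa (p+1) le_rfl (v+2)]
      rw [show N+2-(p+2) = (p+2)+1 by omega]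
      have hx1 := hxnbar v
      simp only [show (p+2)-1 = p+1 from rfl] at hx1
      rw [hx1]
      have hx2 := hxn ((v+2) + (N:ℂ) + 1 - 2*((p+2:ℕ):ℂ) + s)
      simp only [show (p+2)-1 = p+1 from rfl] at hx2
      rw [hx2]
      have e1 : v + ((p+2:ℕ):ℂ) + 1 + s = v + 2*((p+2:ℕ):ℂ) - ((p+1:ℕ):ℂ) + s := by
        push_cast; ring
      have e2 : (v+2) + (N:ℂ) + 1 - 2*((p+2:ℕ):ℂ) + s + ((p+2:ℕ):ℂ)
          = v + ((p+2:ℕ):ℂ) + 2 + s := by push_cast; rw [hNc]; push_cast; ring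
      have e3 : (v+2) + (N:ℂ) + 1 - 2*((p+2:ℕ):ℂ) + s + ((p+2:ℕ):ℂ) + s
          = (v + ((p+2:ℕ):ℂ) + 2) + 2*s := by push_cast; rw [hNc]; push_cast; ring
      have e4 : (v+2) + (N:ℂ) + 1 - 2*((p+2:ℕ):ℂ) + s + ((p+2:ℕ):ℂ) + 1
          = v + 2 + 2*((p+2:ℕ):ℂ) - ((p+1:ℕ):ℂ) + s := by push_cast; rw [hNc]; push_cast; ring
      rw [e4, e3, e2, e1, hYper (p+2) le_rfl (v + ((p+2:ℕ):ℂ) + 2)]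
      have h1 := hYne (p+2) le_rfl (v + ((p+2:ℕ):ℂ) + 2 + s)
      have h2 := hYne (p+2) le_rfl (v + ((p+2:ℕ):ℂ) + 2)
      have h3 := hYne (p+1) (by omega) (v + 2 + 2*((p+2:ℕ):ℂ) - ((p+1:ℕ):ℂ) + s)
      push_cast at h1 h2 h3
      field_simp [h1, h2, h3]
    · rcases Nat.eq_or_lt_of_le hc with hc' | hc'
      · -- case 3 : c = n+1
        have hc'' : c = (p+2)+1 := by omega
        subst hc''
        simp only [Nat.add_sub_cancel]
        rw [PhiN (p+2) N s Y x hn hN1 hY0 hYne hYper hxa hxn v,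
            PhiN (p+2) N s Y x hn hN1 hY0 hYne hYper hxa hxn (v+2)]
        rw [show N+2-((p+2)+1) = p+2 by omega]
        have hx1 := hxn v
        simp only [show (p+2)-1 = p+1 from rfl] at hx1
        rw [hx1]
        have hx2 := hxnbar ((v+2) + (N:ℂ) + 1 - 2*(((p+2)+1:ℕ):ℂ) + s)
        simp only [show (p+2)-1 = p+1 from rfl] at hx2
        rw [hx2]
        have e1 : (v+2) + (N:ℂ) + 1 - 2*(((p+2)+1:ℕ):ℂ) + s + ((p+2:ℕ):ℂ) + 1 + s
            = (v + ((p+2:ℕ):ℂ) + 1) + 2*s := by push_cast; rw [hNc]; push_cast; ring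
        have e2 : (v+2) + (N:ℂ) + 1 - 2*(((p+2)+1:ℕ):ℂ) + s + ((p+2:ℕ):ℂ) + 2
            = v + 2 + ((p+2:ℕ):ℂ) + s := by push_cast; rw [hNc]; push_cast; ring
        have e3 : (v+2) + (N:ℂ) + 1 - 2*(((p+2)+1:ℕ):ℂ) + s + ((p+2:ℕ):ℂ) + 2 + s
            = (v + 2 + ((p+2:ℕ):ℂ)) + 2*s := by push_cast; rw [hNc]; push_cast; ring
        rw [e3, e2, e1, hYper (p+1) (by omega) (v + ((p+2:ℕ):ℂ) + 1),
          hYper (p+2) le_rfl (v + 2 + ((p+2:ℕ):ℂ))]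
        have h1 := hYne (p+1) (by omega) (v + ((p+2:ℕ):ℂ) + 1)
        have h2 := hYne (p+2) le_rfl (v + 2 + ((p+2:ℕ):ℂ) + s)
        have h3 := hYne (p+2) le_rfl (v + 2 + ((p+2:ℕ):ℂ))
        push_cast at h1 h2 h3
        field_simp [h1, h2, h3]
      · -- case 4 : n+2 ≤ c ≤ 2n
        obtain ⟨e, rfl⟩ : ∃ e, c = (p+2)+2+e := ⟨c - (p+2) - 2, by omega⟩
        obtain ⟨f, rfl⟩ : ∃ f, p = f + e := ⟨p - e, by omega⟩
        have hB1 := PhiB (f+e+2) N s Y x hn hN1 hY0 hYne hYper hxa hxn hxnbar hxbar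
          e (by omega) v
        have hB2 := PhiB (f+e+2) N s Y x hn hN1 hY0 hYne hYper hxa hxn hxnbar hxbar
          e (by omega) (v+2)
        rw [show (f+e+2)+2+e-1 = (f+e+2)+1+e by omega, hB1, hB2]
        rw [show (f+e+2)-1-e = f+1 by omega]
        rw [show N+2-((f+e+2)+2+e) = f+1 by omega]
        have hx1 := hxa (f+1) (by omega) (by omega) v
        simp only [Nat.add_sub_cancel] at hx1
        rw [hx1]
        rw [show (f+e+2)+2+e = 2*(f+e+2) - (f+1) + 1 by omega]
        have hx2 := hxbar (f+1) (by omega) (by omega)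
          ((v+2) + (N:ℂ) + 1 - 2*((2*(f+e+2) - (f+1) + 1 : ℕ):ℂ) + s)
        simp only [Nat.add_sub_cancel] at hx2
        rw [hx2]
        have hcast : ((2*(f+e+2) - (f+1) + 1 : ℕ):ℂ) = (f:ℂ) + 2*(e:ℂ) + 4 := by
          rw [show 2*(f+e+2) - (f+1) + 1 = f + 2*e + 4 by omega]; push_cast; ring
        have e0 : v + ((f+e+2:ℕ):ℂ) - 1 - (e:ℂ) = v + (f:ℂ) + 1 := by push_cast; ring
        have e0' : v + 2 + ((f+e+2:ℕ):ℂ) - 1 - (e:ℂ) = v + (f:ℂ) + 3 := by push_cast; ring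
        have e1 : v + ((f+1:ℕ):ℂ) = v + (f:ℂ) + 1 := by push_cast; ring
        have e2 : v + ((f+1:ℕ):ℂ) + 1 = v + (f:ℂ) + 2 := by push_cast; ring
        have e3 : (v+2) + (N:ℂ) + 1 - 2*((2*(f+e+2) - (f+1) + 1 : ℕ):ℂ) + s
              + 2*((f+e+2:ℕ):ℂ) - ((f+1:ℕ):ℂ) + 1 + s
            = (v + (f:ℂ) + 2) + 2*s := by rw [hcast]; push_cast; rw [hNc]; push_cast; ring
        have e4 : (v+2) + (N:ℂ) + 1 - 2*((2*(f+e+2) - (f+1) + 1 : ℕ):ℂ) + s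
              + 2*((f+e+2:ℕ):ℂ) - ((f+1:ℕ):ℂ) + 2 + s
            = (v + (f:ℂ) + 3) + 2*s := by rw [hcast]; push_cast; rw [hNc]; push_cast; ring
        rw [e0, e0', e2, e1, e3, e4, hYper f (by omega) (v + (f:ℂ) + 2),
          hYper (f+1) (by omega) (v + (f:ℂ) + 3)]
        have h1 := hYne f (by omega) (v + (f:ℂ) + 2)
        have h2 := hYne (f+1) (by omega) (v + (f:ℂ) + 3)
        push_cast at h1 h2
        field_simp [h1, h2]

end PartA


lemma starK (N : ℕ) (s : ℂ) (x : ℕ → ℂ → ℂ)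
    (hC : ∀ c, 1 ≤ c → c ≤ N+1 → ∀ v : ℂ,
      PhiP x N s (c-1) v = x (N+2-c) v * (PhiP x N s (c-1) (v+2)
        * x c ((v+2) + (N:ℂ) + 1 - 2*((c:ℕ):ℂ) + s))) :
    ∀ k, k ≤ N+1 → ∀ i j, i + j = k → ∀ v : ℂ,
      dcoef x k j (v + (N:ℂ) + 1 + s - 2*(j:ℂ))
        = (-1:ℂ)^k * scoef x (N+1) k i v * PhiP x N s k (v + 2*(i:ℂ)) := by
  intro k
  induction k with
  | zero =>
    intro _ i j hij v
    obtain ⟨rfl, rfl⟩ : i = 0 ∧ j = 0 := by omega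
    show dcoef x 0 0 _ = _
    rw [dcoef, scoef]
    unfold PhiP
    simp
  | succ k ih =>
    intro hk i j hij v
    rcases Nat.eq_zero_or_pos i with hi0 | hipos
    · -- i = 0, j = k+1
      subst hi0
      have hj : j = k + 1 := by omega
      subst hj
      show dcoef x (k+1) (k+1) _ = _
      rw [dcoef, dcoef_gt x k (k+1) _ (by omega)]
      have IH0 := ih (by omega) 0 k (by omega) v
      have a1 : v + (N:ℂ) + 1 + s - 2*((k+1:ℕ):ℂ) + 2 = v + (N:ℂ) + 1 + s - 2*((k:ℕ):ℂ) := by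
        push_cast; ring
      rw [a1, IH0]
      rw [show scoef x (N+1) (k+1) 0 v = scoef x (N+1) k 0 v from rfl, PhiP_succ]
      have a2 : v + (N:ℂ) + 1 + s - 2*((k+1:ℕ):ℂ)
          = v + 2*((0:ℕ):ℂ) + (N:ℂ) + 1 - 2*((k+1:ℕ):ℂ) + s := by push_cast; ring
      rw [a2]
      ring
    · obtain ⟨i', rfl⟩ : ∃ i', i = i' + 1 := ⟨i - 1, by omega⟩
      rcases Nat.eq_zero_or_pos j with hj0 | hjpos
      · -- j = 0, i = k+1
        subst hj0
        have hi : i' = k := by omega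
        subst hi
        show dcoef x (i'+1) 0 _ = _
        rw [dcoef_zero]
        rw [show scoef x (N+1) (i'+1) (i'+1) v
            = scoef x (N+1) i' (i'+1) v
              - scoef x (N+1) i' i' v * x ((N+1) - i') (v + 2*((i':ℕ):ℂ)) from rfl]
        rw [scoef_gt x (N+1) i' (i'+1) v (by omega), PhiP_succ]
        have IH0 := ih (by omega) i' 0 (by omega) v
        rw [dcoef_zero] at IH0
        have hCk := hC (i'+1) (by omega) (by omega) (v + 2*((i':ℕ):ℂ))
        simp only [Nat.add_sub_cancel] at hCk
        rw [show N+2-(i'+1) = (N+1)-i' by omega] at hCk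
        have g1 : v + 2*((i':ℕ):ℂ) + 2 = v + 2*((i'+1:ℕ):ℂ) := by push_cast; ring
        rw [g1] at hCk
        rw [hCk] at IH0
        linear_combination IH0
      · -- middle case
        obtain ⟨j', rfl⟩ : ∃ j', j = j' + 1 := ⟨j - 1, by omega⟩
        show dcoef x (k+1) (j'+1) _ = _
        rw [dcoef]
        have hijC : (i':ℂ) + (j':ℂ) + 2 = (k:ℂ) + 1 := by
          have : i' + j' + 2 = k + 1 := by omega
          exact_mod_cast congrArg (Nat.cast (R := ℂ)) this
        have IH1 := ih (by omega) i' (j'+1) (by omega) v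
        have IH2 := ih (by omega) (i'+1) j' (by omega) v
        have hCk := hC (k+1) (by omega) (by omega) (v + 2*((i':ℕ):ℂ))
        simp only [Nat.add_sub_cancel] at hCk
        rw [show N+2-(k+1) = (N+1)-k by omega] at hCk
        have g1 : v + 2*((i':ℕ):ℂ) + 2 = v + 2*((i'+1:ℕ):ℂ) := by push_cast; ring
        rw [g1] at hCk
        have a1 : v + (N:ℂ) + 1 + s - 2*((j'+1:ℕ):ℂ) + 2
            = v + (N:ℂ) + 1 + s - 2*((j':ℕ):ℂ) := by push_cast; ring
        rw [a1, IH1, IH2]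
        have a2 : v + (N:ℂ) + 1 + s - 2*((j'+1:ℕ):ℂ)
            = v + 2*((i'+1:ℕ):ℂ) + (N:ℂ) + 1 - 2*((k+1:ℕ):ℂ) + s := by
          push_cast
          push_cast at hijC
          linear_combination (-2:ℂ) * hijC
        rw [a2]
        rw [show scoef x (N+1) (k+1) (i'+1) v
            = scoef x (N+1) k (i'+1) v
              - scoef x (N+1) k i' v * x ((N+1) - k) (v + 2*((i':ℕ):ℂ)) from rfl]
        rw [PhiP_succ, hCk]
        ring

lemma star (n N : ℕ) (s : ℂ) (x : ℕ → ℂ → ℂ) (hN1 : N+1 = 2*n)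
    (hC : ∀ c, 1 ≤ c → c ≤ N+1 → ∀ v : ℂ,
      PhiP x N s (c-1) v = x (N+2-c) v * (PhiP x N s (c-1) (v+2)
        * x c ((v+2) + (N:ℂ) + 1 - 2*((c:ℕ):ℂ) + s)))
    (hPhiTop : ∀ v : ℂ, PhiP x N s (N+1) v = 1) :
    ∀ i, i ≤ N+1 → ∀ v : ℂ,
      dcoef x (N+1) (N+1-i) (v + 2*(i:ℂ) - (N:ℂ) - 1 + s) = dcoef x (N+1) i v := by
  intro i hi v
  have h := starK N s x hC (N+1) le_rfl i (N+1-i) (by omega) v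
  rw [scoef_eq_dcoef x (N+1) i v (by omega), hPhiTop] at h
  have e1 : v + (N:ℂ) + 1 + s - 2*((N+1-i:ℕ):ℂ) = v + 2*(i:ℂ) - (N:ℂ) - 1 + s := by
    rw [Nat.cast_sub (by omega : i ≤ N+1)]
    push_cast
    ring
  rw [e1] at h
  have hpow : (-1:ℂ)^(N+1) = 1 := by rw [hN1, pow_mul]; norm_num
  rw [h, hpow, one_mul, mul_one]

lemma dtop (n N : ℕ) (s : ℂ) (x : ℕ → ℂ → ℂ) (hN1 : N+1 = 2*n)
    (hC : ∀ c, 1 ≤ c → c ≤ N+1 → ∀ v : ℂ,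
      PhiP x N s (c-1) v = x (N+2-c) v * (PhiP x N s (c-1) (v+2)
        * x c ((v+2) + (N:ℂ) + 1 - 2*((c:ℕ):ℂ) + s)))
    (hPhiTop : ∀ v : ℂ, PhiP x N s (N+1) v = 1) :
    ∀ v : ℂ, dcoef x (N+1) (N+1) v = 1 := by
  intro v
  have h := star n N s x hN1 hC hPhiTop (N+1) le_rfl v
  rw [Nat.sub_self, dcoef_zero] at h
  exact h.symm


lemma casorati_shift (N : ℕ) (w : ℕ → ℂ → ℂ) (m : ℕ) (u : ℂ) :
    casorati N w (fun k => k + m) u = casorati N w (fun k => k) (u + 2*(m:ℂ)) := by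
  unfold casorati
  congr 1
  ext j k
  rw [Matrix.of_apply, Matrix.of_apply]
  congr 1
  push_cast
  ring

theorem xi_duality_A2_odd
    (n : ℕ) (hn : 2 ≤ n) (N : ℕ) (hN : N = 2 * n - 1)
    (hbar : ℂ) (hbar_ne : hbar ≠ 0) (s : ℂ)
    (hs : s = (Real.pi : ℂ) * Complex.I / (2 * hbar))
    (Q : ℕ → ℂ → ℂ) (hQ0 : ∀ u, Q 0 u = 1)
    (hQne : ∀ a, 1 ≤ a → a ≤ n → ∀ u, Q a u ≠ 0)
    (hconst : ℕ → ℂ)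
    (hQper : ∀ a, 1 ≤ a → a ≤ n → hconst a ≠ 0 ∧
      ∀ u, Q a (u + (Real.pi : ℂ) * Complex.I / hbar) = hconst a * Q a u)
    (Y : ℕ → ℂ → ℂ) (hY : ∀ a u, Y a u = Q a (u - 1) / Q a (u + 1))
    (x : ℕ → ℂ → ℂ)
    (hxa : ∀ a, 1 ≤ a → a ≤ n - 1 → ∀ u : ℂ,
      x a u = Y a (u + a) / Y (a - 1) (u + a + 1))
    (hxn : ∀ u : ℂ, x n u = Y n (u + n) * Y n (u + n + s) / Y (n - 1) (u + n + 1))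
    (hxnbar : ∀ u : ℂ, x (n + 1) u
      = Y (n - 1) (u + n + 1 + s) / (Y n (u + n + 2) * Y n (u + n + 2 + s)))
    (hxbar : ∀ a, 1 ≤ a → a ≤ n - 1 → ∀ u : ℂ,
      x (2 * n - a + 1) u = Y (a - 1) (u + 2 * (n : ℂ) - a + 1 + s)
        / Y a (u + 2 * (n : ℂ) - a + 2 + s))
    (w : ℕ → ℂ → ℂ)
    (hw : ∀ b, 1 ≤ b → b ≤ N + 1 → ∀ u : ℂ, Lop x (N + 1) (w b) u = 0)
    (hLfac : ∀ a b : ℕ, 1 ≤ b → b ≤ a → a ≤ N + 1 → ∀ u : ℂ,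
      Lfac (fun c v => x c (v + (N : ℂ) + 1 - 2 * c + s)) N a (w b) u = 0)
    (hxi : ∀ u : ℂ, casorati N w (fun k => k) u ≠ 0)
    :
    ∀ a : ℕ, a ≤ N + 1 → ∀ m : ℕ, ∀ u : ℂ,
      casorati N w (fun k => if k < a then k else k + m) u *
        casorati N w (fun k => k) (u + 2 * (a : ℂ) - N - 1 + s)
      = casorati N w (fun k => if k < N + 1 - a then k else k + m)
          (u + 2 * (a : ℂ) - N - 1 + s) *
        casorati N w (fun k => k) u := by
  have hN1 : N + 1 = 2*n := by omega
  -- basic facts about Y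
  have hY0 : ∀ v : ℂ, Y 0 v = 1 := by
    intro v; rw [hY, hQ0, hQ0]; norm_num
  have hYne : ∀ a, a ≤ n → ∀ v : ℂ, Y a v ≠ 0 := by
    intro a ha v
    rw [hY]
    rcases Nat.eq_zero_or_pos a with rfl | hpos
    · rw [hQ0, hQ0]; norm_num
    · exact div_ne_zero (hQne a hpos ha _) (hQne a hpos ha _)
  have h2s : 2*s = (Real.pi:ℂ) * Complex.I / hbar := by
    rw [hs]
    field_simp
  have hYper : ∀ a, a ≤ n → ∀ v : ℂ, Y a (v + 2*s) = Y a v := by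
    intro a ha v
    rcases Nat.eq_zero_or_pos a with rfl | hpos
    · rw [hY0, hY0]
    · obtain ⟨hcne, hcper⟩ := hQper a hpos ha
      rw [hY, hY]
      have e1 : v + 2*s - 1 = (v - 1) + (Real.pi:ℂ)*Complex.I/hbar := by rw [← h2s]; ring
      have e2 : v + 2*s + 1 = (v + 1) + (Real.pi:ℂ)*Complex.I/hbar := by rw [← h2s]; ring
      rw [e1, e2, hcper, hcper, mul_div_mul_left _ _ hcne]
  -- the crux identities
  have hCc := Ccrux n N s Y x hn hN1 hY0 hYne hYper hxa hxn hxnbar hxbar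
  have hPhiTop := Phi_top n N s Y x hn hN1 hY0 hYne hYper hxa hxn hxnbar hxbar
  have hstar := star n N s x hN1 hCc hPhiTop
  have hdtop := dtop n N s x hN1 hCc hPhiTop
  -- the recurrence satisfied by the w's
  have hrec : ∀ b, 1 ≤ b → b ≤ N+1 → ∀ v : ℂ,
      ∑ i ∈ Finset.range (N+2), dcoef x (N+1) i v * w b (v + 2*(i:ℕ)) = 0 := by
    intro b hb1 hb2 v
    rw [← Lop_expand]
    exact hw b hb1 hb2 v
  -- 2-periodicity of ξ
  have hper2 : ∀ v : ℂ, casorati N w (fun k => k) (v + 2) = casorati N w (fun k => k) v := by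
    intro v
    have h := main_det N 1 x w v hrec (N+1) le_rfl
    rw [casorati_congr N w (fun k => if k < N+1 then k else k + 1) (fun k => k) v
      (by intro k hk; show (if k < N+1 then k else k + 1) = k; rw [if_pos hk])] at h
    have hA : (AmatD N 1 (N+1) x v).det = 1 := by
      rw [Matrix.det_fin_one]
      show relc x N v ((0 : Fin 1)).1 (N+1 + ((0 : Fin 1)).1) = 1
      unfold relc
      rw [if_pos (by omega)]
      norm_num
      rw [hdtop]
    rw [hA, mul_one] at h
    have hsgn : (-1:ℂ)^(1*(N+1)) = 1 := by rw [one_mul, hN1, pow_mul]; norm_num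
    rw [hsgn, one_mul, casorati_shift N w 1 v] at h
    rw [h]
    norm_num
  have hperm : ∀ m : ℕ, ∀ v : ℂ,
      casorati N w (fun k => k) (v + 2*(m:ℂ)) = casorati N w (fun k => k) v := by
    intro m
    induction m with
    | zero => intro v; norm_num
    | succ m ih =>
      intro v
      have e : v + 2*((m+1:ℕ):ℂ) = (v + 2*(m:ℂ)) + 2 := by push_cast; ring
      rw [e, hper2, ih]
  intro a ha m u
  have hmain1 := main_det N m x w u hrec a ha
  have hmain2 := main_det N m x w (u + 2 * (a:ℂ) - (N:ℂ) - 1 + s) hrec (N+1-a) (by omega)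
  have hswap : (AmatD N m a x u).det
      = (AmatD N m (N+1-a) x (u + 2 * (a:ℂ) - (N:ℂ) - 1 + s)).det := by
    rw [← Matrix.det_transpose (AmatD N m (N+1-a) x _)]
    congr 1
    ext t t'
    show relc x N u t'.1 (a + t.1)
      = relc x N (u + 2 * (a:ℂ) - (N:ℂ) - 1 + s) t.1 ((N+1-a) + t'.1)
    unfold relc
    by_cases h1 : t'.1 ≤ a + t.1
    · by_cases h2 : a + t.1 - t'.1 ≤ N+1
      · rw [if_pos h1, if_pos (by omega)]
        have hstar' := hstar (a + t.1 - t'.1) (by omega) (u + 2*((t'.1:ℕ):ℂ))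
        have e1 : (N+1) - (a + t.1 - t'.1) = ((N+1-a) + t'.1) - t.1 := by omega
        have e2 : u + 2*((t'.1:ℕ):ℂ) + 2*((a + t.1 - t'.1:ℕ):ℂ) - (N:ℂ) - 1 + s
            = u + 2*(a:ℂ) - (N:ℂ) - 1 + s + 2*((t.1:ℕ):ℂ) := by
          rw [Nat.cast_sub h1]
          push_cast
          ring
        rw [e1, e2] at hstar'
        exact hstar'.symm
      · rw [if_pos h1, if_neg (by omega), dcoef_gt x (N+1) _ _ (by omega)]
    · rw [if_neg h1, if_pos (by omega), dcoef_gt x (N+1) _ _ (by omega)]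
  -- signs
  have hsgn2 : (-1:ℂ)^(m*(N+1-a)) = (-1:ℂ)^(m*a) := by
    have h1 : (-1:ℂ)^(m*a) * (-1:ℂ)^(m*(N+1-a)) = 1 := by
      rw [← pow_add, show m*a + m*(N+1-a) = m*(N+1) by
        rw [← Nat.mul_add]; congr 1; omega]
      rw [hN1, show m*(2*n) = 2*(m*n) by ring, pow_mul]
      norm_num
    have h2 : (-1:ℂ)^(m*a) * (-1:ℂ)^(m*a) = 1 := by
      rw [← pow_add, ← two_mul, pow_mul]
      norm_num
    exact mul_left_cancel₀ (show ((-1:ℂ))^(m*a) ≠ 0 from pow_ne_zero _ (by norm_num))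
      (h1.trans h2.symm)
  -- rewrite the two main formulas
  rw [casorati_shift, hperm] at hmain1 hmain2
  rw [hmain1, hmain2, hswap, hsgn2]
  ring
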